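/- Let C be a set of Horn clauses over a finite set X with distinguished constants True and False, and consider the complete pebbling marking. Then C is unsatisfiable if and only if False is marked '*'. -/

import Mathlib

structure HornClause (V : Type) where
  prem : Finset V
  concl : Option V

def HornClause.sat {V : Type} (v : V → Bool) (c : HornClause V) : Prop :=
  (∀ x ∈ c.prem, v x = true) → ∃ y, c.concl = some y ∧ v y = true

def SatAll {V : Type} (v : V → Bool) (C : Set (HornClause V)) : Prop :=
  ∀ c ∈ C, c.sat v

/-- `Marked C x` : variable x receives mark '*' via a finite pebbling sequence.
(Clauses `true ⟹ x` have empty premise set, i.e. premise True.) -/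
inductive Marked {V : Type} (C : Set (HornClause V)) : V → Prop
  | step (c : HornClause V) (hc : c ∈ C) (y : V) (hy : c.concl = some y)
      (h : ∀ x ∈ c.prem, Marked C x) : Marked C y

/-- `MarkedRel C z y` : variable y receives the relative mark '*z'. The mark
'*z' starts at z itself and propagates along a clause when all premises are
marked '*' or '*z' (the premises carrying mark '*z' are collected in S). -/
inductive MarkedRel {V : Type} (C : Set (HornClause V)) (z : V) : V → Prop
  | self : MarkedRel C z z
  | step (c : HornClause V) (hc : c ∈ C) (y : V) (hy : c.concl = some y)
      (S : Finset V) (hS : ∀ x ∈ c.prem, x ∈ S ∨ Marked C x)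
      (h : ∀ x ∈ S, MarkedRel C z x) : MarkedRel C z y

/-- False is marked '*' : some clause with conclusion false has all premises marked '*'. -/
def BotMarked {V : Type} (C : Set (HornClause V)) : Prop :=
  ∃ c ∈ C, c.concl = none ∧ ∀ x ∈ c.prem, Marked C x

/-- False is marked '*z' : some clause with conclusion false has all premises
marked '*' or '*z'. -/
def BotMarkedRel {V : Type} (C : Set (HornClause V)) (z : V) : Prop :=
  ∃ c ∈ C, c.concl = none ∧ ∀ x ∈ c.prem, Marked C x ∨ MarkedRel C z x

/-- C is unsatisfiable iff False is marked '*' in the complete marking. -/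
theorem stmt7 {V : Type} [Fintype V] (C : Set (HornClause V)) :
    (¬ ∃ v : V → Bool, SatAll v C) ↔ BotMarked C := by
  classical
  constructor
  · intro hunsat
    by_contra hbot
    apply hunsat
    refine ⟨fun x => decide (Marked C x), fun c hc hprem => ?_⟩
    have hall : ∀ x ∈ c.prem, Marked C x := fun x hx => by
      have := hprem x hx; simpa using this
    cases hy : c.concl with
    | none => exact absurd ⟨c, hc, hy, hall⟩ hbot
    | some y => exact ⟨y, rfl, by simp [Marked.step c hc y hy hall]⟩
  · rintro ⟨c, hc, hnone, hall⟩ ⟨v, hv⟩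
    have key : ∀ x, Marked C x → v x = true := by
      intro x hx
      induction hx with
      | step c' hc' y hy h ih =>
        obtain ⟨y', hy', hvy'⟩ := hv c' hc' ih
        rw [hy] at hy'; cases hy'; exact hvy'
    obtain ⟨y, hy, _⟩ := hv c hc (fun x hx => key x (hall x hx))
    rw [hnone] at hy; cases hy
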